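/- Let p = (x, y, z, s) ∈ ℝ^n. If p ∉ Σ(f) (i.e. x_{2i−1} + 2z·x_{2i} ≠ 0 for some 1 ≤ i ≤ k, or y + 3z² ≠ 0), then the derivative Df_p is injective. If p ∈ Σ(f), then the kernel of Df_p is exactly the one-dimensional span of the coordinate vector e_z. In particular, dim ker Df_p ≤ 1 for every p ∈ ℝ^n (f is a corank-≤1 map). -/

import Mathlib

noncomputable section

open scoped RealInnerProductSpace

/-- Index type for the domain `ℝⁿ`, `n = 2k+2+m`: coordinates `x` (2k of them),
`y`, `z`, and `s` (m of them). -/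
abbrev DomIx (k m : ℕ) := (Fin (2*k)) ⊕ Unit ⊕ Unit ⊕ (Fin m)

/-- The domain `ℝⁿ` with its Euclidean inner product. -/
abbrev Dom (k m : ℕ) := EuclideanSpace ℝ (DomIx k m)

/-- Index type for the codomain `ℝ^{n+k}`: coordinates `X` (2k+1), `Y` (k), `Z`, `S` (m). -/
abbrev CodIx (k m : ℕ) := (Fin (2*k+1)) ⊕ (Fin k) ⊕ Unit ⊕ (Fin m)

/-- The codomain `ℝ^{n+k}` with its Euclidean inner product. -/
abbrev Cod (k m : ℕ) := EuclideanSpace ℝ (CodIx k m)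

/-- The `x`-coordinates of a point (0-based: `px p j` is `x_{j+1}`). -/
def px {k m : ℕ} (p : Dom k m) (j : Fin (2*k)) : ℝ := p (Sum.inl j)

/-- The `y`-coordinate of a point. -/
def py {k m : ℕ} (p : Dom k m) : ℝ := p (Sum.inr (Sum.inl ()))

/-- The `z`-coordinate of a point. -/
def pz {k m : ℕ} (p : Dom k m) : ℝ := p (Sum.inr (Sum.inr (Sum.inl ())))

/-- The `s`-coordinates of a point. -/
def ps {k m : ℕ} (p : Dom k m) (j : Fin m) : ℝ := p (Sum.inr (Sum.inr (Sum.inr j)))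

/-- The (0-based) index of the coordinate `x_{2i-1}` (1-based), for `i : Fin k` (0-based). -/
def xo {k : ℕ} (i : Fin k) : Fin (2*k) := ⟨2*i.1, by have := i.isLt; omega⟩

/-- The (0-based) index of the coordinate `x_{2i}` (1-based), for `i : Fin k` (0-based). -/
def xe {k : ℕ} (i : Fin k) : Fin (2*k) := ⟨2*i.1+1, by have := i.isLt; omega⟩

/-- The cusp normal form `f : ℝⁿ → ℝ^{n+k}`:
`X_i = x_i`, `X_{2k+1} = y`, `Y_i = z x_{2i-1} + z² x_{2i}`, `Z = z y + z³`, `S_j = s_j`. -/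
def cuspF (k m : ℕ) (p : Dom k m) : Cod k m :=
  (EuclideanSpace.equiv (CodIx k m) ℝ).symm fun q =>
    match q with
    | Sum.inl j => if h : j.1 < 2*k then px p ⟨j.1, h⟩ else py p
    | Sum.inr (Sum.inl i) => pz p * px p (xo i) + (pz p)^2 * px p (xe i)
    | Sum.inr (Sum.inr (Sum.inl _)) => pz p * py p + (pz p)^3
    | Sum.inr (Sum.inr (Sum.inr j)) => ps p j

/-- The singular set `Σ(f)` of the cusp normal form:
`x_{2i-1} + 2 z x_{2i} = 0` for all `i` and `y + 3z² = 0`. -/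
def SingSet (k m : ℕ) : Set (Dom k m) :=
  {p | (∀ i : Fin k, px p (xo i) + 2 * pz p * px p (xe i) = 0) ∧ py p + 3 * (pz p)^2 = 0}

/-- The standard basis vector `e_z` of the domain. -/
def ez (k m : ℕ) : Dom k m := EuclideanSpace.single (Sum.inr (Sum.inr (Sum.inl ()))) 1


-- auxiliary
def prj {k m : ℕ} (q : DomIx k m) : Dom k m →L[ℝ] ℝ := EuclideanSpace.proj q

def iy (k m : ℕ) : DomIx k m := Sum.inr (Sum.inl ())
def iz (k m : ℕ) : DomIx k m := Sum.inr (Sum.inr (Sum.inl ()))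

def Dcoord (k m : ℕ) (p : Dom k m) : CodIx k m → (Dom k m →L[ℝ] ℝ)
  | Sum.inl j =>
      if h : j.1 < 2*k then prj (Sum.inl ⟨j.1, h⟩ : DomIx k m)
      else prj (iy k m)
  | Sum.inr (Sum.inl i) =>
      pz p • prj (Sum.inl (xo i) : DomIx k m)
      + (pz p)^2 • prj (Sum.inl (xe i) : DomIx k m)
      + (px p (xo i) + 2 * pz p * px p (xe i)) • prj (iz k m)
  | Sum.inr (Sum.inr (Sum.inl _)) =>
      pz p • prj (iy k m)
      + (py p + 3 * (pz p)^2) • prj (iz k m)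
  | Sum.inr (Sum.inr (Sum.inr j)) =>
      prj (Sum.inr (Sum.inr (Sum.inr j)) : DomIx k m)

def Dmap (k m : ℕ) (p : Dom k m) : Dom k m →L[ℝ] Cod k m :=
  ((EuclideanSpace.equiv (CodIx k m) ℝ).symm : (CodIx k m → ℝ) →L[ℝ] Cod k m).comp
    (ContinuousLinearMap.pi (Dcoord k m p))

theorem hasD {k m : ℕ} (p : Dom k m) : HasFDerivAt (cuspF k m) (Dmap k m p) p := by
  have hco : cuspF k m = ⇑(EuclideanSpace.equiv (CodIx k m) ℝ).symm ∘
      (fun p q => match q with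
    | Sum.inl j => if h : j.1 < 2*k then px p ⟨j.1, h⟩ else py p
    | Sum.inr (Sum.inl i) => pz p * px p (xo i) + (pz p)^2 * px p (xe i)
    | Sum.inr (Sum.inr (Sum.inl _)) => pz p * py p + (pz p)^3
    | Sum.inr (Sum.inr (Sum.inr j)) => ps p j) := rfl
  rw [hco, Dmap]
  rw [(EuclideanSpace.equiv (CodIx k m) ℝ).symm.comp_hasFDerivAt_iff]
  rw [hasFDerivAt_pi']
  intro q
  rw [ContinuousLinearMap.proj_pi]
  have hx : ∀ j : Fin (2*k), HasFDerivAt (fun p : Dom k m => px p j)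
      (prj (Sum.inl j : DomIx k m)) p :=
    fun j => (prj (Sum.inl j : DomIx k m)).hasFDerivAt
  have hy : HasFDerivAt (fun p : Dom k m => py p) (prj (iy k m)) p :=
    (prj (iy k m)).hasFDerivAt
  have hz : HasFDerivAt (fun p : Dom k m => pz p) (prj (iz k m)) p :=
    (prj (iz k m)).hasFDerivAt
  match q with
  | Sum.inl j =>
    rcases Nat.lt_or_ge j.1 (2*k) with h | h
    · simpa only [Dcoord, dif_pos h] using hx ⟨j.1, h⟩
    · simpa only [Dcoord, dif_neg (by omega : ¬ j.1 < 2*k)] using hy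
  | Sum.inr (Sum.inl i) =>
    have h2 := ((hz.mul (hx (xo i))).add (((hz.mul hz)).mul (hx (xe i))))
    have heq : (fun p : Dom k m => pz p * px p (xo i) + pz p ^ 2 * px p (xe i))
        = fun p : Dom k m => pz p * px p (xo i) + (pz p * pz p) * px p (xe i) := by
      funext p; ring
    rw [show (Sum.inr (Sum.inl i) : CodIx k m) = Sum.inr (Sum.inl i) from rfl]
    refine heq ▸ ?_
    convert h2 using 1
    ext v
    simp [Dcoord, prj]
    ext w
    simp [Dcoord, prj]
    ring
  | Sum.inr (Sum.inr (Sum.inl u)) =>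
    have h3 := ((hz.mul hy).add (((hz.mul hz)).mul hz))
    have heq : (fun p : Dom k m => pz p * py p + pz p ^ 3)
        = fun p : Dom k m => pz p * py p + (pz p * pz p) * pz p := by
      funext p; ring
    refine heq ▸ ?_
    convert h3 using 1
    ext v
    simp [Dcoord, prj]
    ext w
    simp [Dcoord, prj]
    ring
  | Sum.inr (Sum.inr (Sum.inr j)) =>
    exact (prj (Sum.inr (Sum.inr (Sum.inr j)) : DomIx k m)).hasFDerivAt

theorem Dmap_apply' {k m : ℕ} (p v : Dom k m) (q : CodIx k m) :
    Dmap k m p v q = Dcoord k m p q v := rfl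

theorem Dmap_zero_iff {k m : ℕ} (p v : Dom k m) :
    Dmap k m p v = 0 ↔ ∀ q, Dcoord k m p q v = 0 := by
  constructor
  · intro h q
    rw [← Dmap_apply', h]; rfl
  · intro h
    apply PiLp.ext
    intro q
    rw [Dmap_apply', h]; rfl

theorem ker_coords {k m : ℕ} (p v : Dom k m) (h : ∀ q, Dcoord k m p q v = 0) :
    (∀ j : Fin (2*k), v (Sum.inl j) = 0) ∧ v (iy k m) = 0 ∧
    (∀ j : Fin m, v (Sum.inr (Sum.inr (Sum.inr j))) = 0) ∧
    (∀ i : Fin k, (px p (xo i) + 2 * pz p * px p (xe i)) * v (iz k m) = 0) ∧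
    (py p + 3 * (pz p)^2) * v (iz k m) = 0 := by
  have hx : ∀ j : Fin (2*k), v (Sum.inl j) = 0 := by
    intro j
    have := h (Sum.inl ⟨j.1, by omega⟩)
    simpa [Dcoord, prj, j.isLt] using this
  have hy : v (iy k m) = 0 := by
    have := h (Sum.inl ⟨2*k, by omega⟩)
    simpa [Dcoord, prj] using this
  refine ⟨hx, hy, ?_, ?_, ?_⟩
  · intro j
    have := h (Sum.inr (Sum.inr (Sum.inr j)))
    simpa [Dcoord, prj] using this
  · intro i
    have := h (Sum.inr (Sum.inl i))
    simp [Dcoord, prj, hx (xo i), hx (xe i)] at this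
    exact mul_eq_zero.mpr this
  · have := h (Sum.inr (Sum.inr (Sum.inl ())))
    simp [Dcoord, prj, hy] at this
    exact mul_eq_zero.mpr this

theorem ez_apply {k m : ℕ} (q : DomIx k m) :
    ez k m q = if q = iz k m then 1 else 0 := by
  simp [ez, iz, EuclideanSpace.single_apply]
  congr

theorem Dmap_ez_zero {k m : ℕ} (p : Dom k m) (hs : p ∈ SingSet k m) :
    Dmap k m p (ez k m) = 0 := by
  rw [Dmap_zero_iff]
  intro q
  match q with
  | Sum.inl j =>
    rcases Nat.lt_or_ge j.1 (2*k) with hlt | hge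
    · simp [Dcoord, prj, dif_pos hlt, ez_apply, iz]
    · simp [Dcoord, prj, dif_neg (by omega : ¬ j.1 < 2*k), ez_apply, iy, iz]
  | Sum.inr (Sum.inl i) =>
    have := hs.1 i
    simp [Dcoord, prj, ez_apply, iz, this]
  | Sum.inr (Sum.inr (Sum.inl u)) =>
    have := hs.2
    simp [Dcoord, prj, ez_apply, iy, iz, this]
  | Sum.inr (Sum.inr (Sum.inr j)) =>
    simp [Dcoord, prj, ez_apply, iz]

theorem vz_zero_of_nonsing {k m : ℕ} (p v : Dom k m) (hns : p ∉ SingSet k m)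
    (h : Dmap k m p v = 0) : v = 0 := by
  have key := ker_coords p v ((Dmap_zero_iff p v).mp h)
  have hvz : v (iz k m) = 0 := by
    have hns' : ¬ ((∀ i : Fin k, px p (xo i) + 2 * pz p * px p (xe i) = 0) ∧
        py p + 3 * (pz p)^2 = 0) := hns
    rcases not_and_or.mp hns' with h1 | h2
    · push_neg at h1
      obtain ⟨i, hi⟩ := h1
      exact (mul_eq_zero.mp (key.2.2.2.1 i)).resolve_left hi
    · exact (mul_eq_zero.mp key.2.2.2.2).resolve_left h2
  apply PiLp.ext
  intro q
  match q with
  | Sum.inl j => exact key.1 j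
  | Sum.inr (Sum.inl u) => exact key.2.1
  | Sum.inr (Sum.inr (Sum.inl u)) => exact hvz
  | Sum.inr (Sum.inr (Sum.inr j)) => exact key.2.2.1 j

/-- If `p ∉ Σ(f)` then `Df_p` is injective; if `p ∈ Σ(f)` then
`ker Df_p = span {e_z}`; in particular `dim ker Df_p ≤ 1` for every `p`. -/
theorem statement0 (k m : ℕ) (hk : 1 ≤ k) (p : Dom k m) :
    (p ∉ SingSet k m → Function.Injective (fderiv ℝ (cuspF k m) p)) ∧
    (p ∈ SingSet k m →
      LinearMap.ker (fderiv ℝ (cuspF k m) p : Dom k m →ₗ[ℝ] Cod k m) = Submodule.span ℝ {ez k m}) ∧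
    Module.finrank ℝ (LinearMap.ker (fderiv ℝ (cuspF k m) p : Dom k m →ₗ[ℝ] Cod k m)) ≤ 1 := by
  have hf : fderiv ℝ (cuspF k m) p = Dmap k m p := (hasD p).fderiv
  have h1 : p ∉ SingSet k m → Function.Injective (fderiv ℝ (cuspF k m) p) := by
    intro hns v w hvw
    rw [hf] at hvw
    have h0 : Dmap k m p (v - w) = 0 := by rw [map_sub, hvw, sub_self]
    exact sub_eq_zero.mp (vz_zero_of_nonsing p (v - w) hns h0)
  have h2 : p ∈ SingSet k m →
      LinearMap.ker (fderiv ℝ (cuspF k m) p : Dom k m →ₗ[ℝ] Cod k m) = Submodule.span ℝ {ez k m} := by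
    intro hs
    apply le_antisymm
    · intro v hv
      rw [LinearMap.mem_ker, hf] at hv
      have key := ker_coords p v ((Dmap_zero_iff p v).mp hv)
      rw [Submodule.mem_span_singleton]
      refine ⟨v (iz k m), ?_⟩
      apply PiLp.ext
      intro q
      have hsm : (v (iz k m) • ez k m) q = v (iz k m) * ez k m q := rfl
      rw [hsm, ez_apply]
      match q with
      | Sum.inl j => simp [iz]; exact (key.1 j).symm
      | Sum.inr (Sum.inl u) => simp [iz]; exact (key.2.1).symm
      | Sum.inr (Sum.inr (Sum.inl u)) => simp [iz]
      | Sum.inr (Sum.inr (Sum.inr j)) => simp [iz]; exact (key.2.2.1 j).symm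
    · rw [Submodule.span_le, Set.singleton_subset_iff]
      rw [SetLike.mem_coe, LinearMap.mem_ker, hf]
      exact Dmap_ez_zero p hs
  refine ⟨h1, h2, ?_⟩
  by_cases hs : p ∈ SingSet k m
  · rw [h2 hs]
    have hez : ez k m ≠ 0 := by
      intro hc
      have h0 : ez k m (iz k m) = 0 := by rw [hc]; rfl
      rw [ez_apply] at h0; simp at h0
    rw [finrank_span_singleton hez]
  · have hbot : LinearMap.ker (fderiv ℝ (cuspF k m) p : Dom k m →ₗ[ℝ] Cod k m) = ⊥ := by
      rw [Submodule.eq_bot_iff]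
      intro v hv
      rw [LinearMap.mem_ker, hf] at hv
      exact vz_zero_of_nonsing p v hs hv
    rw [hbot, finrank_bot]
    exact Nat.zero_le 1
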